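/- Let S be a set and let A and B be families of nonempty subsets of S. Then ⌊A ⊔ B⌋ = ⌊(A ∩ B) ∪ ((A \ B) ⊔ (B \ A))⌋. In particular, if A ⊆ B then ⌊A ⊔ B⌋ = ⌊A⌋. -/
import Mathlib

/-- `A ⊔ B = {a ∪ b | a ∈ A, b ∈ B}`. -/
def sqcupFam {S : Type} (A B : Set (Set S)) : Set (Set S) :=
  {c | ∃ a ∈ A, ∃ b ∈ B, c = a ∪ b}

/-- `⌊X⌋`: the `⊆`-minimal elements of a family of sets. -/
def mins {S : Type} (X : Set (Set S)) : Set (Set S) :=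
  {x ∈ X | ∀ y ∈ X, y ⊆ x → y = x}

theorem mins_eq_of {S : Type} {C D : Set (Set S)} (h1 : D ⊆ C)
    (h2 : ∀ c ∈ C, ∃ d ∈ D, d ⊆ c) : mins C = mins D := by
  ext x
  constructor
  · rintro ⟨hxC, hmin⟩
    obtain ⟨d, hd, hdx⟩ := h2 x hxC
    have hdx' : d = x := hmin d (h1 hd) hdx
    subst hdx'
    exact ⟨hd, fun y hy hyx => hmin y (h1 hy) hyx⟩
  · rintro ⟨hxD, hmin⟩
    refine ⟨h1 hxD, fun y hy hyx => ?_⟩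
    obtain ⟨d, hd, hdy⟩ := h2 y hy
    have hdx : d = x := hmin d hd (hdy.trans hyx)
    subst hdx
    exact Set.Subset.antisymm hyx hdy

/-- Lemma 12 and its corollary: for families `A`, `B` of nonempty
subsets of `S`, `⌊A ⊔ B⌋ = ⌊(A ∩ B) ∪ ((A \ B) ⊔ (B \ A))⌋`; in particular if
`A ⊆ B` then `⌊A ⊔ B⌋ = ⌊A⌋`. -/
theorem mins_sqcup {S : Type} (A B : Set (Set S))
    (hA : ∀ a ∈ A, a.Nonempty) (hB : ∀ b ∈ B, b.Nonempty) :
    mins (sqcupFam A B) = mins ((A ∩ B) ∪ sqcupFam (A \ B) (B \ A)) ∧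
    (A ⊆ B → mins (sqcupFam A B) = mins A) := by
  constructor
  · apply mins_eq_of
    · rintro x (⟨hxA, hxB⟩ | ⟨a, ⟨haA, _⟩, b, ⟨hbB, _⟩, rfl⟩)
      · exact ⟨x, hxA, x, hxB, (Set.union_self x).symm⟩
      · exact ⟨a, haA, b, hbB, rfl⟩
    · rintro c ⟨a, haA, b, hbB, rfl⟩
      by_cases haB : a ∈ B
      · exact ⟨a, Or.inl ⟨haA, haB⟩, Set.subset_union_left⟩
      by_cases hbA : b ∈ A
      · exact ⟨b, Or.inl ⟨hbA, hbB⟩, Set.subset_union_right⟩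
      · exact ⟨a ∪ b, Or.inr ⟨a, ⟨haA, haB⟩, b, ⟨hbB, hbA⟩, rfl⟩, subset_rfl⟩
  · intro hAB
    apply mins_eq_of
    · intro a ha
      exact ⟨a, ha, a, hAB ha, (Set.union_self a).symm⟩
    · rintro c ⟨a, haA, b, hbB, rfl⟩
      exact ⟨a, haA, Set.subset_union_left⟩
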